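/- arXiv:2603.14487 — 2 statements merged into one kernel-verified Lean document; each statement's English description precedes it below -/
import Mathlib

section
/- For all real s > 0, the Laplace transform of the function t ↦ e^{-t/2} I₀(t/2) equals 1/√(s(1+s)), where I₀ is the modified Bessel function of the first kind of order 0. -/
open Real MeasureTheory

open Finset in
lemma centralBinom_reflect (m : ℕ) :
    2 * (∑ k ∈ range (m+1), k * Nat.centralBinom k * Nat.centralBinom (m-k)) =
      m * ∑ k ∈ range (m+1), Nat.centralBinom k * Nat.centralBinom (m-k) := by
  have h := Finset.sum_range_reflect
    (fun k => k * Nat.centralBinom k * Nat.centralBinom (m-k)) (m+1)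
  rw [two_mul]
  nth_rewrite 1 [← h]
  rw [← Finset.sum_add_distrib, Finset.mul_sum]
  apply Finset.sum_congr rfl
  intro j hj
  have hj' : j ≤ m := Nat.lt_succ_iff.mp (Finset.mem_range.mp hj)
  simp only [Nat.add_sub_cancel]
  rw [Nat.sub_sub_self hj']
  have : (m - j) * Nat.centralBinom (m - j) * Nat.centralBinom j
      + j * Nat.centralBinom j * Nat.centralBinom (m - j)
      = ((m - j) + j) * (Nat.centralBinom j * Nat.centralBinom (m - j)) := by ring
  rw [this, Nat.sub_add_cancel hj']

open Finset in
lemma centralBinom_conv (n : ℕ) :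
    ∑ k ∈ range (n+1), Nat.centralBinom k * Nat.centralBinom (n-k) = 4^n := by
  induction n with
  | zero => simp [Nat.centralBinom]
  | succ n ih =>
    set S := fun m => ∑ k ∈ range (m+1), Nat.centralBinom k * Nat.centralBinom (m-k) with hS
    set T := ∑ k ∈ range (n+1), k * Nat.centralBinom k * Nat.centralBinom (n-k) with hT
    have hA : ∑ k ∈ range (n+2), k * Nat.centralBinom k * Nat.centralBinom (n+1-k)
        = 4 * T + 2 * S n := by
      rw [Finset.sum_range_succ' (fun k => k * Nat.centralBinom k * Nat.centralBinom (n+1-k)) (n+1)]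
      simp only [Nat.zero_mul, Nat.add_sub_cancel, zero_mul, add_zero]
      have : ∀ j, (j+1) * Nat.centralBinom (j+1) * Nat.centralBinom (n+1-(j+1))
          = (4*j + 2) * (Nat.centralBinom j * Nat.centralBinom (n-j)) := by
        intro j
        rw [Nat.succ_mul_centralBinom_succ]
        have : n + 1 - (j + 1) = n - j := by omega
        rw [this]; ring
      rw [Finset.sum_congr rfl (fun j _ => this j)]
      rw [hT, hS]
      rw [Finset.mul_sum, Finset.mul_sum, ← Finset.sum_add_distrib]
      apply Finset.sum_congr rfl
      intro j _
      ring
    have h1 : (n+1) * S (n+1) = 2 * (4 * T + 2 * S n) := by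
      rw [← hA, ← centralBinom_reflect (n+1)]
    have h2 : 2 * T = n * S n := centralBinom_reflect n
    have h3 : (n+1) * S (n+1) = (n+1) * (4 * S n) := by
      rw [h1]
      have : 2 * (4 * T + 2 * S n) = 4 * (2 * T) + 4 * S n := by ring
      rw [this, h2]; ring
    have h4 : S (n+1) = 4 * S n := Nat.eq_of_mul_eq_mul_left (Nat.succ_pos n) h3
    show S (n+1) = 4^(n+1)
    rw [h4]
    have : S n = 4^n := ih
    rw [this]
    ring

lemma centralBinom_le_four_pow (n : ℕ) : Nat.centralBinom n ≤ 4 ^ n := by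
  calc Nat.centralBinom n = (2*n).choose n := Nat.centralBinom_eq_two_mul_choose n
    _ ≤ (2*n+1).choose n := Nat.choose_le_choose n (Nat.le_succ _)
    _ ≤ 4 ^ n := Nat.choose_middle_le_pow n

lemma summable_centralBinom_mul {x : ℝ} (hx : 0 ≤ x) (hlt : 4 * x < 1) :
    Summable (fun j : ℕ => (Nat.centralBinom j : ℝ) * x ^ j) := by
  have h1 : ∀ j : ℕ, 0 ≤ (Nat.centralBinom j : ℝ) * x ^ j := fun j => by positivity
  have h2 : ∀ j : ℕ, (Nat.centralBinom j : ℝ) * x ^ j ≤ (4*x) ^ j := by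
    intro j
    rw [mul_pow]
    apply mul_le_mul_of_nonneg_right _ (by positivity)
    calc (Nat.centralBinom j : ℝ) ≤ ((4:ℕ) ^ j : ℕ) := by
          exact_mod_cast centralBinom_le_four_pow j
      _ = 4 ^ j := by push_cast; ring
  exact Summable.of_nonneg_of_le h1 h2 (summable_geometric_of_lt_one (by positivity) hlt)

open Finset in
lemma tsum_centralBinom_mul {x : ℝ} (hx : 0 ≤ x) (hlt : 4 * x < 1) :
    ∑' j : ℕ, (Nat.centralBinom j : ℝ) * x ^ j = 1 / Real.sqrt (1 - 4*x) := by
  set f := fun j : ℕ => (Nat.centralBinom j : ℝ) * x ^ j with hf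
  have hsum : Summable f := summable_centralBinom_mul hx hlt
  have hnorm : Summable (fun j => ‖f j‖) := by
    refine hsum.congr fun j => ?_
    rw [Real.norm_of_nonneg (by positivity)]
  have hsq : (∑' j, f j) * (∑' j, f j)
      = ∑' n : ℕ, ∑ k ∈ range (n+1), f k * f (n-k) :=
    tsum_mul_tsum_eq_tsum_sum_range_of_summable_norm hnorm hnorm
  have hinner : ∀ n : ℕ, ∑ k ∈ range (n+1), f k * f (n-k) = (4*x) ^ n := by
    intro n
    have : ∀ k ∈ range (n+1), f k * f (n-k)
        = (Nat.centralBinom k * Nat.centralBinom (n-k) : ℕ) * x ^ n := by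
      intro k hk
      have hk' : k ≤ n := Nat.lt_succ_iff.mp (Finset.mem_range.mp hk)
      simp only [hf]
      push_cast
      rw [show (Nat.centralBinom k : ℝ) * x ^ k * ((Nat.centralBinom (n-k) : ℝ) * x ^ (n-k))
          = (Nat.centralBinom k : ℝ) * (Nat.centralBinom (n-k)) * (x ^ k * x ^ (n-k)) by ring,
        ← pow_add, Nat.add_sub_cancel' hk']
    rw [Finset.sum_congr rfl this, ← Finset.sum_mul, ← Nat.cast_sum, centralBinom_conv n]
    push_cast
    rw [mul_pow]
  have hfin : (∑' j, f j) * (∑' j, f j) = (1 - 4*x)⁻¹ := by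
    rw [hsq]
    simp_rw [hinner]
    exact tsum_geometric_of_lt_one (by positivity) hlt
  have hpos : 0 ≤ ∑' j, f j := tsum_nonneg fun j => by positivity
  have : ∑' j, f j = Real.sqrt ((1 - 4*x)⁻¹) := by
    rw [← Real.sqrt_mul_self hpos] at *
    exact congrArg Real.sqrt hfin
  rw [this, Real.sqrt_inv, one_div]

lemma integrableOn_exp_neg_mul_pow {a : ℝ} (ha : 0 < a) (n : ℕ) :
    IntegrableOn (fun t : ℝ => Real.exp (-(a*t)) * t^n) (Set.Ioi 0) := by
  have h := integrableOn_rpow_mul_exp_neg_mul_rpow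
    (show (-1:ℝ) < (n:ℝ) from neg_one_lt_zero.trans_le (Nat.cast_nonneg n)) (one_pos : (0:ℝ) < 1) ha
  refine h.congr_fun (fun x _ => ?_) measurableSet_Ioi
  simp [Real.rpow_natCast, Real.rpow_one, mul_comm, neg_mul]

lemma integral_exp_neg_mul_pow {a : ℝ} (ha : 0 < a) (n : ℕ) :
    ∫ t in Set.Ioi (0:ℝ), Real.exp (-(a*t)) * t^n = ((Nat.factorial n : ℕ) : ℝ) / a^(n+1) := by
  have h := integral_rpow_mul_exp_neg_mul_rpow (p := 1) (q := (n:ℝ)) (b := a)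
    one_pos (neg_one_lt_zero.trans_le (Nat.cast_nonneg n)) ha
  simp only [Real.rpow_one, div_one, one_div, one_mul] at h
  have heq : ∀ x : ℝ, x ^ (n:ℝ) * Real.exp (-a * x) = Real.exp (-(a*x)) * x ^ n := by
    intro x
    rw [Real.rpow_natCast, neg_mul, mul_comm]
  simp_rw [heq] at h
  rw [h]
  rw [show -((n:ℝ)+1) = -(((n+1:ℕ)):ℝ) by push_cast; ring]
  rw [Real.rpow_neg ha.le, Real.rpow_natCast]
  rw [show ((n:ℝ)+1) = ((n:ℕ):ℝ)+1 from rfl, Real.Gamma_nat_eq_factorial n]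
  ring

noncomputable def besselI0 (ζ : ℝ) : ℝ := ∑' j : ℕ, (ζ ^ 2 / 4) ^ j / ((Nat.factorial j : ℝ)) ^ 2

theorem laplace_transform_bessel (s : ℝ) (hs : 0 < s) :
    ∫ t in Set.Ioi (0 : ℝ), Real.exp (-s * t) * (Real.exp (-t / 2) * besselI0 (t / 2)) =
      1 / Real.sqrt (s * (1 + s)) := by
  set a : ℝ := s + 1/2 with ha_def
  have ha : 0 < a := by positivity
  have ha' : (1:ℝ)/2 < a := by simp [ha_def, hs]
  set F : ℕ → ℝ → ℝ := fun j t =>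
    ((16:ℝ)^j * ((Nat.factorial j : ℕ) : ℝ)^2)⁻¹ * (Real.exp (-(a*t)) * t^(2*j)) with hF
  have hfac_pos : ∀ j : ℕ, (0:ℝ) < ((Nat.factorial j : ℕ) : ℝ) := fun j => by
    exact_mod_cast Nat.factorial_pos j
  -- pointwise rewriting of the integrand
  have hpt : ∀ t : ℝ, Real.exp (-s*t) * (Real.exp (-t/2) * besselI0 (t/2)) = ∑' j, F j t := by
    intro t
    rw [besselI0, ← mul_assoc, ← Real.exp_add,
      show -s*t + -t/2 = -(a*t) by rw [ha_def]; ring, ← tsum_mul_left]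
    congr 1
    funext j
    have h1 : ((t/2)^2/4) = t^2/16 := by ring
    rw [hF, h1]
    simp only
    rw [pow_mul, div_pow]
    have h16 : (0:ℝ) < 16^j := by positivity
    field_simp
  -- integrability of each term
  have hint : ∀ j : ℕ, IntegrableOn (F j) (Set.Ioi 0) := by
    intro j
    exact (integrableOn_exp_neg_mul_pow ha (2*j)).const_mul _
  -- value of each integral
  have hval : ∀ j : ℕ, ∫ t in Set.Ioi (0:ℝ), F j t
      = ((16:ℝ)^j * ((Nat.factorial j : ℕ) : ℝ)^2)⁻¹
        * (((Nat.factorial (2*j) : ℕ) : ℝ) / a^(2*j+1)) := by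
    intro j
    rw [hF]
    simp only
    rw [integral_const_mul, integral_exp_neg_mul_pow ha (2*j)]
  -- the common value, rewritten through central binomial coefficients
  set x : ℝ := (16 * a^2)⁻¹ with hx_def
  have hx0 : 0 ≤ x := by positivity
  have hx1 : 4 * x < 1 := by
    rw [hx_def]
    rw [mul_inv_lt_iff₀ (by positivity), one_mul, ha_def]
    nlinarith [hs, sq_nonneg s]
  have hterm : ∀ j : ℕ, ((16:ℝ)^j * ((Nat.factorial j : ℕ) : ℝ)^2)⁻¹
      * (((Nat.factorial (2*j) : ℕ) : ℝ) / a^(2*j+1))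
      = (1/a) * ((Nat.centralBinom j : ℝ) * x ^ j) := by
    intro j
    have hfact : ((Nat.factorial (2*j) : ℕ) : ℝ)
        = (Nat.centralBinom j : ℝ) * ((Nat.factorial j : ℕ) : ℝ)^2 := by
      have := Nat.choose_mul_factorial_mul_factorial (Nat.le_mul_of_pos_left j two_pos)
      rw [Nat.centralBinom_eq_two_mul_choose]
      have h2j : 2*j - j = j := by omega
      rw [h2j] at this
      rw [← this]
      push_cast
      ring
    rw [hfact, hx_def, inv_pow, mul_pow, ← pow_mul]
    have h16 : (0:ℝ) < 16^j := by positivity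
    have hfj := hfac_pos j
    have hap : (0:ℝ) < a^(2*j+1) := by positivity
    have hap2 : (0:ℝ) < a^(2*j) := by positivity
    field_simp
    rw [pow_succ]
    ring
  -- summability of the integrals of the norms
  have hnonneg : ∀ j : ℕ, ∀ t : ℝ, 0 ≤ F j t := by
    intro j t
    rw [hF]
    simp only
    have : (0:ℝ) ≤ t^(2*j) := by rw [pow_mul]; positivity
    positivity
  have hnormval : ∀ j : ℕ, (∫ t in Set.Ioi (0:ℝ), ‖F j t‖)
      = (1/a) * ((Nat.centralBinom j : ℝ) * x ^ j) := by
    intro j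
    rw [show (fun t => ‖F j t‖) = F j by funext t; exact Real.norm_of_nonneg (hnonneg j t)]
    rw [hval j, hterm j]
  have hsumm : Summable (fun j : ℕ => (Nat.centralBinom j : ℝ) * x ^ j) :=
    summable_centralBinom_mul hx0 hx1
  have hnormsum : Summable (fun j : ℕ => ∫ t in Set.Ioi (0:ℝ), ‖F j t‖) := by
    simp_rw [hnormval]
    exact hsumm.mul_left _
  -- put everything together
  calc ∫ t in Set.Ioi (0 : ℝ), Real.exp (-s * t) * (Real.exp (-t / 2) * besselI0 (t / 2))
      = ∫ t in Set.Ioi (0 : ℝ), ∑' j, F j t := by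
        apply MeasureTheory.setIntegral_congr_fun measurableSet_Ioi
        intro t _
        exact hpt t
    _ = ∑' j, ∫ t in Set.Ioi (0:ℝ), F j t :=
        (MeasureTheory.integral_tsum_of_summable_integral_norm hint hnormsum).symm
    _ = ∑' j, (1/a) * ((Nat.centralBinom j : ℝ) * x ^ j) := by
        congr 1
        funext j
        rw [hval j, hterm j]
    _ = (1/a) * ∑' j, ((Nat.centralBinom j : ℝ) * x ^ j) := tsum_mul_left
    _ = (1/a) * (1 / Real.sqrt (1 - 4*x)) := by rw [tsum_centralBinom_mul hx0 hx1]
    _ = 1 / Real.sqrt (s * (1 + s)) := by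
        have h14 : 1 - 4*x = s * (1 + s) / a^2 := by
          rw [hx_def]
          field_simp
          rw [ha_def]
          ring
        rw [h14, Real.sqrt_div (by positivity : (0:ℝ) ≤ s * (1+s)), Real.sqrt_sq_eq_abs,
          abs_of_pos ha]
        have hsq : 0 < Real.sqrt (s * (1 + s)) := Real.sqrt_pos.mpr (by positivity)
        field_simp
end

section
/- Define f_M(t) = (1/2) e^{-t/2} [I₀(ζ) - I₀''(ζ)]_{ζ=t/2}. Then f_M(0) = 1/4 and f_M(t) ≥ 0 for all t ≥ 0. -/
open Set

noncomputable def fM (t : ℝ) : ℝ :=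
  (1 / 2) * Real.exp (-t / 2) * (besselI0 (t / 2) - deriv (deriv besselI0) (t / 2))

noncomputable def cJ (j : ℕ) : ℝ := ((4:ℝ) ^ j * (Nat.factorial j : ℝ) ^ 2)⁻¹

lemma cJ_pos (j : ℕ) : 0 < cJ j := by
  unfold cJ; positivity

noncomputable def UU (R : ℝ) (j : ℕ) : ℝ := (2 * (j:ℝ) + 2) ^ 2 * (R ^ 2) ^ j * cJ j

lemma two_cast_nonneg (j : ℕ) : (0:ℝ) ≤ (j:ℝ) := Nat.cast_nonneg j

lemma sq_coef_ge_one (j : ℕ) : (1:ℝ) ≤ (2 * (j:ℝ) + 2) ^ 2 := by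
  nlinarith [two_cast_nonneg j]

lemma coef2_le (j : ℕ) : ((2 * j : ℕ) : ℝ) ≤ (2 * (j:ℝ) + 2) ^ 2 := by
  push_cast; nlinarith [two_cast_nonneg j]

lemma coef3_le (j : ℕ) : ((2 * j : ℕ) : ℝ) * ((2 * j - 1 : ℕ) : ℝ) ≤ (2 * (j:ℝ) + 2) ^ 2 := by
  have h1 : ((2 * j - 1 : ℕ) : ℝ) ≤ ((2 * j : ℕ) : ℝ) := by exact_mod_cast Nat.sub_le _ _
  have h0 : (0:ℝ) ≤ ((2 * j - 1 : ℕ) : ℝ) := Nat.cast_nonneg _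
  have h3 : ((2 * j : ℕ) : ℝ) = 2 * (j:ℝ) := by push_cast; ring
  nlinarith [two_cast_nonneg j]

lemma summable_UU (R : ℝ) : Summable (UU R) := by
  apply Summable.of_nonneg_of_le (f := fun j => 4 * ((R ^ 2) ^ j / (Nat.factorial j : ℝ)))
  · intro j
    exact mul_nonneg (mul_nonneg (by positivity) (by positivity)) (cJ_pos j).le
  · intro j
    have hF : (1:ℝ) ≤ (Nat.factorial j : ℝ) := by
      exact_mod_cast Nat.one_le_iff_ne_zero.mpr (Nat.factorial_ne_zero j)
    have hFpos : (0:ℝ) < (Nat.factorial j : ℝ) := lt_of_lt_of_le one_pos hF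
    have h2 : (j:ℝ) + 1 ≤ 2 ^ j := by
      have : (j:ℕ) + 1 ≤ 2 ^ j := Nat.lt_two_pow_self
      exact_mod_cast this
    have hpow : ((2:ℝ) ^ j) ^ 2 = 4 ^ j := by
      rw [← pow_mul, mul_comm, pow_mul]; norm_num
    have hsq : ((j:ℝ) + 1) * ((j:ℝ) + 1) ≤ (2:ℝ) ^ j * 2 ^ j :=
      mul_le_mul h2 h2 (by positivity) (by positivity)
    have h4 : (2 * (j:ℝ) + 2) ^ 2 ≤ 4 * 4 ^ j := by nlinarith
    have hkey : (2 * (j:ℝ) + 2) ^ 2 * cJ j ≤ 4 / (Nat.factorial j : ℝ) := by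
      unfold cJ
      rw [← one_div, mul_one_div, div_le_div_iff₀ (by positivity) hFpos]
      have h4p : (0:ℝ) < (4:ℝ) ^ j := by positivity
      have hB : (Nat.factorial j : ℝ) ≤ (Nat.factorial j : ℝ) ^ 2 := by nlinarith
      have hA := mul_le_mul_of_nonneg_right h4 hFpos.le
      have hC : 4 * (4:ℝ) ^ j * (Nat.factorial j : ℝ) ≤ 4 * ((4:ℝ) ^ j * (Nat.factorial j : ℝ) ^ 2) := by
        nlinarith
      linarith
    have hR : (0:ℝ) ≤ (R ^ 2) ^ j := by positivity
    calc (2 * (j:ℝ) + 2) ^ 2 * (R ^ 2) ^ j * cJ j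
        = (R ^ 2) ^ j * ((2 * (j:ℝ) + 2) ^ 2 * cJ j) := by ring
      _ ≤ (R ^ 2) ^ j * (4 / (Nat.factorial j : ℝ)) := mul_le_mul_of_nonneg_left hkey hR
      _ = 4 * ((R ^ 2) ^ j / (Nat.factorial j : ℝ)) := by ring
  · exact (Real.summable_pow_div_factorial (R ^ 2)).mul_left 4

lemma term_bound {R y : ℝ} (hR : 1 ≤ R) (hy : |y| ≤ R) (j m : ℕ) (hm : m ≤ 2 * j)
    {K : ℝ} (hK : 0 ≤ K) (hK2 : K ≤ (2 * (j:ℝ) + 2) ^ 2) :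
    |cJ j * (K * y ^ m)| ≤ UU R j := by
  have hR0 : (0:ℝ) ≤ R := le_trans zero_le_one hR
  have h1 : |cJ j * (K * y ^ m)| = cJ j * (K * |y| ^ m) := by
    rw [abs_mul, abs_mul, abs_pow, abs_of_nonneg (cJ_pos j).le, abs_of_nonneg hK]
  rw [h1]
  have h2 : |y| ^ m ≤ R ^ m := pow_le_pow_left₀ (abs_nonneg y) hy m
  have h3 : R ^ m ≤ R ^ (2 * j) := pow_le_pow_right₀ hR hm
  have h4 : K * |y| ^ m ≤ (2 * (j:ℝ) + 2) ^ 2 * R ^ (2 * j) :=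
    mul_le_mul hK2 (le_trans h2 h3) (by positivity) (by positivity)
  have h5 : R ^ (2 * j) = (R ^ 2) ^ j := by rw [pow_mul]
  calc cJ j * (K * |y| ^ m) ≤ cJ j * ((2 * (j:ℝ) + 2) ^ 2 * R ^ (2 * j)) :=
        mul_le_mul_of_nonneg_left h4 (cJ_pos j).le
    _ = UU R j := by rw [h5]; unfold UU; ring

lemma bessel_eq : besselI0 = fun x => ∑' j : ℕ, cJ j * x ^ (2 * j) := by
  funext x
  unfold besselI0
  refine tsum_congr fun j => ?_
  rw [div_pow, ← pow_mul]
  unfold cJ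
  ring

lemma summable_base {R x : ℝ} (hR : 1 ≤ R) (hx : |x| ≤ R) :
    Summable fun j : ℕ => cJ j * x ^ (2 * j) := by
  apply Summable.of_norm_bounded (summable_UU R)
  intro j
  rw [Real.norm_eq_abs, show cJ j * x ^ (2 * j) = cJ j * (1 * x ^ (2 * j)) by ring]
  exact term_bound hR hx j (2 * j) le_rfl zero_le_one (sq_coef_ge_one j)

lemma hasDerivAt_S1 (x : ℝ) :
    HasDerivAt (fun y => ∑' j : ℕ, cJ j * y ^ (2 * j))
      (∑' j : ℕ, cJ j * ((2 * j : ℕ) * x ^ (2 * j - 1))) x := by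
  set R := |x| + 1 with hRdef
  have habs := abs_nonneg x
  have hR1 : 1 ≤ R := by simp only [hRdef]; linarith
  have hxmem : x ∈ Ioo (-R) R := by
    refine ⟨?_, ?_⟩
    · nlinarith [neg_abs_le x]
    · nlinarith [le_abs_self x]
  have hmem_abs : ∀ y ∈ Ioo (-R) R, |y| ≤ R := fun y hy => abs_le.mpr ⟨hy.1.le, hy.2.le⟩
  apply hasDerivAt_tsum_of_isPreconnected (summable_UU R) isOpen_Ioo isPreconnected_Ioo
    (fun j y _ => (hasDerivAt_pow (2 * j) y).const_mul (cJ j))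
    (fun j y hy => ?_) hxmem (summable_base hR1 (hmem_abs x hxmem)) hxmem
  rw [Real.norm_eq_abs]
  exact term_bound hR1 (hmem_abs y hy) j (2 * j - 1) (Nat.sub_le _ _) (Nat.cast_nonneg _) (coef2_le j)

lemma hasDerivAt_S2 (x : ℝ) :
    HasDerivAt (fun y => ∑' j : ℕ, cJ j * ((2 * j : ℕ) * y ^ (2 * j - 1)))
      (∑' j : ℕ, cJ j * ((2 * j : ℕ) * ((2 * j - 1 : ℕ) * x ^ (2 * j - 1 - 1)))) x := by
  set R := |x| + 1 with hRdef
  have habs := abs_nonneg x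
  have hR1 : 1 ≤ R := by simp only [hRdef]; linarith
  have hxmem : x ∈ Ioo (-R) R := by
    refine ⟨?_, ?_⟩
    · nlinarith [neg_abs_le x]
    · nlinarith [le_abs_self x]
  have hmem_abs : ∀ y ∈ Ioo (-R) R, |y| ≤ R := fun y hy => abs_le.mpr ⟨hy.1.le, hy.2.le⟩
  have hbase : Summable fun j : ℕ => cJ j * ((2 * j : ℕ) * x ^ (2 * j - 1)) := by
    apply Summable.of_norm_bounded (summable_UU R)
    intro j
    rw [Real.norm_eq_abs]
    exact term_bound hR1 (hmem_abs x hxmem) j (2 * j - 1) (Nat.sub_le _ _) (Nat.cast_nonneg _)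
      (coef2_le j)
  apply hasDerivAt_tsum_of_isPreconnected (summable_UU R) isOpen_Ioo isPreconnected_Ioo
    (fun j y _ => ((hasDerivAt_pow (2 * j - 1) y).const_mul ((2 * j : ℕ) : ℝ)).const_mul (cJ j))
    (fun j y hy => ?_) hxmem hbase hxmem
  have hK : (0:ℝ) ≤ ((2 * j : ℕ) : ℝ) * ((2 * j - 1 : ℕ) : ℝ) := by positivity
  have := term_bound hR1 (hmem_abs y hy) j (2 * j - 1 - 1)
    (le_trans (Nat.sub_le _ _) (Nat.sub_le _ _)) hK (coef3_le j)
  calc ‖cJ j * (((2 * j : ℕ) : ℝ) * (((2 * j - 1 : ℕ) : ℝ) * y ^ (2 * j - 1 - 1)))‖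
      = |cJ j * ((((2 * j : ℕ) : ℝ) * ((2 * j - 1 : ℕ) : ℝ)) * y ^ (2 * j - 1 - 1))| := by
        rw [Real.norm_eq_abs, mul_assoc]
    _ ≤ UU R j := this

lemma deriv_bessel : deriv besselI0 = fun x => ∑' j : ℕ, cJ j * ((2 * j : ℕ) * x ^ (2 * j - 1)) := by
  funext x
  rw [bessel_eq]
  exact (hasDerivAt_S1 x).deriv

lemma deriv2_bessel (x : ℝ) : deriv (deriv besselI0) x
    = ∑' j : ℕ, cJ j * ((2 * j : ℕ) * ((2 * j - 1 : ℕ) * x ^ (2 * j - 1 - 1))) := by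
  rw [deriv_bessel]
  exact (hasDerivAt_S2 x).deriv

lemma besselI0_zero : besselI0 0 = 1 := by
  unfold besselI0
  rw [tsum_eq_single 0 (by intro b hb; simp [zero_pow hb])]
  norm_num

lemma deriv2_zero : deriv (deriv besselI0) 0 = 1 / 2 := by
  rw [deriv2_bessel]
  rw [tsum_eq_single 1 ?_]
  · norm_num [cJ, Nat.factorial]
  · intro b hb
    match b, hb with
    | 0, _ => norm_num
    | (n+2), _ =>
      have h : 2 * (n + 2) - 1 - 1 = 2 * n + 2 := by omega
      rw [h]
      simp [zero_pow]

theorem fM_density_properties : fM 0 = 1 / 4 ∧ ∀ t : ℝ, 0 ≤ t → 0 ≤ fM t := by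
  constructor
  · unfold fM
    rw [show (0:ℝ)/2 = 0 by norm_num, show -(0:ℝ)/2 = 0 by norm_num,
      besselI0_zero, deriv2_zero, Real.exp_zero]
    norm_num
  · intro t ht
    unfold fM
    set x := t / 2 with hxdef
    have hx : 0 ≤ x := by positivity
    have hxabs : |x| ≤ x + 1 := by rw [abs_of_nonneg hx]; linarith
    have hR1 : (1:ℝ) ≤ x + 1 := by linarith
    have hA : Summable fun j : ℕ => cJ j * x ^ (2 * j) := summable_base hR1 hxabs
    have haSum : Summable fun j : ℕ =>
        cJ j * ((2 * j : ℕ) * ((2 * j - 1 : ℕ) * x ^ (2 * j - 1 - 1))) := by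
      apply Summable.of_norm_bounded (summable_UU (x + 1))
      intro j
      have hK : (0:ℝ) ≤ ((2 * j : ℕ) : ℝ) * ((2 * j - 1 : ℕ) : ℝ) := by positivity
      have := term_bound hR1 hxabs j (2 * j - 1 - 1)
        (le_trans (Nat.sub_le _ _) (Nat.sub_le _ _)) hK (coef3_le j)
      calc ‖cJ j * (((2 * j : ℕ) : ℝ) * (((2 * j - 1 : ℕ) : ℝ) * x ^ (2 * j - 1 - 1)))‖
          = |cJ j * ((((2 * j : ℕ) : ℝ) * ((2 * j - 1 : ℕ) : ℝ)) * x ^ (2 * j - 1 - 1))| := by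
            rw [Real.norm_eq_abs, mul_assoc]
        _ ≤ UU (x + 1) j := this
    have haShift : Summable fun k : ℕ =>
        cJ (k+1) * ((2 * (k+1) : ℕ) * ((2 * (k+1) - 1 : ℕ) * x ^ (2 * (k+1) - 1 - 1))) :=
      (summable_nat_add_iff 1).mpr haSum
    have hmain : 0 ≤ besselI0 x - deriv (deriv besselI0) x := by
      rw [deriv2_bessel, show besselI0 x = ∑' j : ℕ, cJ j * x ^ (2 * j) by rw [bessel_eq]]
      rw [Summable.tsum_eq_zero_add haSum]
      have h0 : cJ 0 * (((2 * 0 : ℕ) : ℝ) * (((2 * 0 - 1 : ℕ) : ℝ) * x ^ (2 * 0 - 1 - 1))) = 0 := by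
        norm_num
      rw [h0, zero_add, ← Summable.tsum_sub hA haShift]
      apply tsum_nonneg
      intro j
      have hexp : 2 * (j + 1) - 1 - 1 = 2 * j := by omega
      have hc1 : ((2 * (j+1) : ℕ) : ℝ) = 2 * (j:ℝ) + 2 := by push_cast; ring
      have hc2 : ((2 * (j+1) - 1 : ℕ) : ℝ) = 2 * (j:ℝ) + 1 := by
        have h : 2 * (j+1) - 1 = 2 * j + 1 := by omega
        rw [h]; push_cast; ring
      simp only [hexp, hc1, hc2]
      have hc : cJ (j+1) = cJ j / (4 * ((j:ℝ)+1)^2) := by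
        unfold cJ
        rw [Nat.factorial_succ, pow_succ]
        push_cast
        have hFpos : (0:ℝ) < (Nat.factorial j : ℝ) := by exact_mod_cast Nat.factorial_pos j
        have hJ1 : (0:ℝ) < (j:ℝ) + 1 := by positivity
        field_simp
      have hcoef : cJ (j+1) * ((2 * (j:ℝ) + 2) * (2 * (j:ℝ) + 1)) ≤ cJ j := by
        rw [hc, div_mul_eq_mul_div, div_le_iff₀ (by positivity)]
        have := (cJ_pos j).le
        nlinarith [two_cast_nonneg j]
      have hxp : (0:ℝ) ≤ x ^ (2 * j) := by positivity
      nlinarith [mul_le_mul_of_nonneg_right hcoef hxp]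
    have hpos : (0:ℝ) ≤ (1/2) * Real.exp (-t/2) := by positivity
    exact mul_nonneg hpos hmain
end
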